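/- If a defect free atomic representation σ of F_θ⁺ has connected graph, then for any two basis rays ℂξ₁ and ℂξ₂ there exist a basis ray ℂη and words w₁, w₂ ∈ F_θ⁺ such that σ(w_i)·ℂη = ℂξ_i for i = 1, 2. (Any undirected path in the graph of σ can be replaced by a 'pull back then push forward' path of the form w₂ w₁*.) -/

import Mathlib

inductive TwoGraphGen (I J : Type) : Type
  | e : I → TwoGraphGen I J
  | f : J → TwoGraphGen I J

def twoGraphRel {I J : Type} (θ : Equiv.Perm (I × J)) :
    FreeMonoid (TwoGraphGen I J) → FreeMonoid (TwoGraphGen I J) → Prop :=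
  fun a b => ∃ i j,
    a = FreeMonoid.of (TwoGraphGen.e i) * FreeMonoid.of (TwoGraphGen.f j) ∧
    b = FreeMonoid.of (TwoGraphGen.f (θ (i, j)).2) * FreeMonoid.of (TwoGraphGen.e (θ (i, j)).1)

def FTheta {I J : Type} (θ : Equiv.Perm (I × J)) : Type :=
  (conGen (twoGraphRel θ)).Quotient

instance {I J : Type} (θ : Equiv.Perm (I × J)) : Monoid (FTheta θ) :=
  inferInstanceAs (Monoid (conGen (twoGraphRel θ)).Quotient)

def FTheta.E {I J : Type} (θ : Equiv.Perm (I × J)) (i : I) : FTheta θ :=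
  (conGen (twoGraphRel θ)).mk' (FreeMonoid.of (TwoGraphGen.e i))

def FTheta.F {I J : Type} (θ : Equiv.Perm (I × J)) (j : J) : FTheta θ :=
  (conGen (twoGraphRel θ)).mk' (FreeMonoid.of (TwoGraphGen.f j))

def FTheta.eWord {I J : Type} (θ : Equiv.Perm (I × J)) (u : List I) : FTheta θ :=
  (u.map (FTheta.E θ)).prod

def FTheta.fWord {I J : Type} (θ : Equiv.Perm (I × J)) (v : List J) : FTheta θ :=
  (v.map (FTheta.F θ)).prod

lemma FThetaComm {I J : Type} (θ : Equiv.Perm (I × J)) (i : I) (j : J) :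
    FTheta.E θ i * FTheta.F θ j = FTheta.F θ (θ (i, j)).2 * FTheta.E θ (θ (i, j)).1 := by
  show (conGen (twoGraphRel θ)).mk' _ * (conGen (twoGraphRel θ)).mk' _ =
    (conGen (twoGraphRel θ)).mk' _ * (conGen (twoGraphRel θ)).mk' _
  rw [← map_mul, ← map_mul]
  exact (Con.eq _).2 (ConGen.Rel.of _ _ ⟨i, j, rfl, rfl⟩)

section Aux

variable {m n : ℕ} {θ : Equiv.Perm (Fin m × Fin n)}
  {H : Type*} [NormedAddCommGroup H] [InnerProductSpace ℂ H]
  {S : Type*} {ξ : S → H} {σ : FTheta θ →* (H →L[ℂ] H)}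

lemma index_eq (hon : Orthonormal ℂ ξ) {t b : S} {α : ℂ} (h : ξ t = α • ξ b) : t = b := by
  classical
  by_contra hne
  have h0 : inner ℂ (ξ t) (ξ b) = (0 : ℂ) := by
    have := orthonormal_iff_ite.mp hon t b
    simpa [hne] using this
  have h1 : inner ℂ (ξ t) (ξ t) = (1 : ℂ) := by
    have := orthonormal_iff_ite.mp hon t t
    simpa using this
  have h2 : inner ℂ (ξ t) (ξ t) = α * inner ℂ (ξ t) (ξ b) := by
    nth_rewrite 2 [h]
    rw [inner_smul_right]
  rw [h1, h0, mul_zero] at h2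
  exact one_ne_zero h2

lemma scal_div {A : H →L[ℂ] H} {x y : H} {μ α : ℂ} (hμ : μ ≠ 0)
    (h : A (μ • x) = α • y) : A x = (μ⁻¹ * α) • y := by
  have h3 := congrArg (fun v => μ⁻¹ • v) h
  simpa [smul_smul, inv_mul_cancel₀ hμ] using h3

variable (hon : Orthonormal ℂ ξ)
    (hatomic : ∀ (w : FTheta θ) (s : S),
      (∃ (t : S) (α : ℂ), ‖α‖ = 1 ∧ σ w (ξ s) = α • ξ t) ∨ σ w (ξ s) = 0)
    (hdfE : ∀ s : S, ∃! p : Fin m × S,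
      ∃ α : ℂ, α ≠ 0 ∧ σ (FTheta.E θ p.1) (ξ p.2) = α • ξ s)
    (hdfF : ∀ s : S, ∃! q : Fin n × S,
      ∃ α : ℂ, α ≠ 0 ∧ σ (FTheta.F θ q.1) (ξ q.2) = α • ξ s)

include hon hatomic hdfE hdfF

lemma pullE (L : FreeMonoid (TwoGraphGen (Fin m) (Fin n))) :
    ∀ (t b c : S) (i : Fin m) (α β : ℂ), α ≠ 0 → β ≠ 0 →
      σ ((conGen (twoGraphRel θ)).mk' L) (ξ t) = α • ξ b →
      σ (FTheta.E θ i) (ξ c) = β • ξ b →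
      ∃ (t' : S) (u w : FTheta θ) (γ δ : ℂ), γ ≠ 0 ∧ δ ≠ 0 ∧
        σ u (ξ t') = γ • ξ t ∧ σ w (ξ t') = δ • ξ c := by
  have hne : ∀ s : S, ξ s ≠ 0 := fun s => hon.ne_zero s
  induction L using FreeMonoid.inductionOn' with
  | one =>
      intro t b c i α β hα hβ hL hE
      have ht : t = b := index_eq hon (by rw [show σ ((conGen (twoGraphRel θ)).mk' 1) = 1 from map_one σ] at hL; simpa using hL)
      subst ht
      exact ⟨c, FTheta.E θ i, 1, β, 1, hβ, one_ne_zero, hE, by simp⟩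
  | of_mul g xs IH =>
      intro t b c i α β hα hβ hL hE
      rw [map_mul, show σ ((conGen (twoGraphRel θ)).mk' (FreeMonoid.of g) * (conGen (twoGraphRel θ)).mk' xs) = σ ((conGen (twoGraphRel θ)).mk' (FreeMonoid.of g)) * σ ((conGen (twoGraphRel θ)).mk' xs) from map_mul σ _ _, ContinuousLinearMap.mul_apply] at hL
      have hxs_ne : σ ((conGen (twoGraphRel θ)).mk' xs) (ξ t) ≠ 0 := by
        intro h0
        rw [h0, map_zero] at hL
        exact smul_ne_zero hα (hne b) hL.symm
      rcases hatomic ((conGen (twoGraphRel θ)).mk' xs) t with ⟨r, μ, hμnorm, hr⟩ | h0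
      swap
      · exact absurd h0 hxs_ne
      have hμ : μ ≠ 0 := by
        intro h; rw [h] at hμnorm; simp at hμnorm
      rw [hr] at hL
      have hg := scal_div hμ hL
      have hμα : μ⁻¹ * α ≠ 0 := mul_ne_zero (inv_ne_zero hμ) hα
      cases g with
      | e i₀ =>
          obtain ⟨p, _, hpu⟩ := hdfE b
          have e1 := hpu (i₀, r) ⟨μ⁻¹ * α, hμα, hg⟩
          have e2 := hpu (i, c) ⟨β, hβ, hE⟩
          have hrc : r = c := congrArg Prod.snd (e1.trans e2.symm)
          exact ⟨t, 1, (conGen (twoGraphRel θ)).mk' xs, 1, μ, one_ne_zero, hμ,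
            by simp, by rw [← hrc]; exact hr⟩
      | f j₀ =>
          obtain ⟨⟨j', c'⟩, ⟨γ, hγ0, hγ⟩, _⟩ := hdfF c
          have hEq : σ (FTheta.F θ (θ (i, j')).2) (σ (FTheta.E θ (θ (i, j')).1) (ξ c'))
              = (γ * β) • ξ b := by
            have h5 : σ (FTheta.E θ i) (σ (FTheta.F θ j') (ξ c')) = (γ * β) • ξ b := by
              rw [hγ, ContinuousLinearMap.map_smul, hE, smul_smul]
            calc σ (FTheta.F θ (θ (i, j')).2) (σ (FTheta.E θ (θ (i, j')).1) (ξ c'))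
                = σ (FTheta.F θ (θ (i, j')).2 * FTheta.E θ (θ (i, j')).1) (ξ c') := by
                  rw [map_mul, ContinuousLinearMap.mul_apply]
              _ = σ (FTheta.E θ i * FTheta.F θ j') (ξ c') := by rw [FThetaComm]
              _ = σ (FTheta.E θ i) (σ (FTheta.F θ j') (ξ c')) := by
                  rw [map_mul, ContinuousLinearMap.mul_apply]
              _ = (γ * β) • ξ b := h5
          have hγβ : γ * β ≠ 0 := mul_ne_zero hγ0 hβ
          have hne2 : σ (FTheta.E θ (θ (i, j')).1) (ξ c') ≠ 0 := by
            intro h0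
            rw [h0, map_zero] at hEq
            exact smul_ne_zero hγβ (hne b) hEq.symm
          rcases hatomic (FTheta.E θ (θ (i, j')).1) c' with ⟨r', δ, hδnorm, hδ⟩ | h0
          swap
          · exact absurd h0 hne2
          have hδ0 : δ ≠ 0 := by
            intro h; rw [h] at hδnorm; simp at hδnorm
          rw [hδ] at hEq
          have hFr' := scal_div hδ0 hEq
          obtain ⟨q, _, hqu⟩ := hdfF b
          have e1 := hqu ((θ (i, j')).2, r')
            ⟨δ⁻¹ * (γ * β), mul_ne_zero (inv_ne_zero hδ0) hγβ, hFr'⟩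
          have e2 := hqu (j₀, r) ⟨μ⁻¹ * α, hμα, hg⟩
          have hrr : r' = r := congrArg Prod.snd (e1.trans e2.symm)
          rw [hrr] at hδ
          obtain ⟨t', u, w, γ', δ', hγ', hδ', hu, hw⟩ :=
            IH t r c' (θ (i, j')).1 μ δ hμ hδ0 hr hδ
          refine ⟨t', u, FTheta.F θ j' * w, γ', δ' * γ, hγ', mul_ne_zero hδ' hγ0, hu, ?_⟩
          rw [map_mul, ContinuousLinearMap.mul_apply, hw,
            ContinuousLinearMap.map_smul, hγ, smul_smul]

lemma pullF (L : FreeMonoid (TwoGraphGen (Fin m) (Fin n))) :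
    ∀ (t b c : S) (j : Fin n) (α β : ℂ), α ≠ 0 → β ≠ 0 →
      σ ((conGen (twoGraphRel θ)).mk' L) (ξ t) = α • ξ b →
      σ (FTheta.F θ j) (ξ c) = β • ξ b →
      ∃ (t' : S) (u w : FTheta θ) (γ δ : ℂ), γ ≠ 0 ∧ δ ≠ 0 ∧
        σ u (ξ t') = γ • ξ t ∧ σ w (ξ t') = δ • ξ c := by
  have hne : ∀ s : S, ξ s ≠ 0 := fun s => hon.ne_zero s
  induction L using FreeMonoid.inductionOn' with
  | one =>
      intro t b c j α β hα hβ hL hF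
      have ht : t = b := index_eq hon (by rw [show σ ((conGen (twoGraphRel θ)).mk' 1) = 1 from map_one σ] at hL; simpa using hL)
      subst ht
      exact ⟨c, FTheta.F θ j, 1, β, 1, hβ, one_ne_zero, hF, by simp⟩
  | of_mul g xs IH =>
      intro t b c j α β hα hβ hL hF
      rw [map_mul, show σ ((conGen (twoGraphRel θ)).mk' (FreeMonoid.of g) * (conGen (twoGraphRel θ)).mk' xs) = σ ((conGen (twoGraphRel θ)).mk' (FreeMonoid.of g)) * σ ((conGen (twoGraphRel θ)).mk' xs) from map_mul σ _ _, ContinuousLinearMap.mul_apply] at hL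
      have hxs_ne : σ ((conGen (twoGraphRel θ)).mk' xs) (ξ t) ≠ 0 := by
        intro h0
        rw [h0, map_zero] at hL
        exact smul_ne_zero hα (hne b) hL.symm
      rcases hatomic ((conGen (twoGraphRel θ)).mk' xs) t with ⟨r, μ, hμnorm, hr⟩ | h0
      swap
      · exact absurd h0 hxs_ne
      have hμ : μ ≠ 0 := by
        intro h; rw [h] at hμnorm; simp at hμnorm
      rw [hr] at hL
      have hg := scal_div hμ hL
      have hμα : μ⁻¹ * α ≠ 0 := mul_ne_zero (inv_ne_zero hμ) hα
      cases g with
      | f j₀ =>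
          obtain ⟨q, _, hqu⟩ := hdfF b
          have e1 := hqu (j₀, r) ⟨μ⁻¹ * α, hμα, hg⟩
          have e2 := hqu (j, c) ⟨β, hβ, hF⟩
          have hrc : r = c := congrArg Prod.snd (e1.trans e2.symm)
          exact ⟨t, 1, (conGen (twoGraphRel θ)).mk' xs, 1, μ, one_ne_zero, hμ,
            by simp, by rw [← hrc]; exact hr⟩
      | e i₀ =>
          obtain ⟨⟨i', c'⟩, ⟨γ, hγ0, hγ⟩, _⟩ := hdfE c
          have hpair : θ ((θ.symm (i', j)).1, (θ.symm (i', j)).2) = (i', j) := by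
            simp
          have hcomm : FTheta.E θ (θ.symm (i', j)).1 * FTheta.F θ (θ.symm (i', j)).2
              = FTheta.F θ j * FTheta.E θ i' := by
            have h6 := FThetaComm θ (θ.symm (i', j)).1 (θ.symm (i', j)).2
            rw [hpair] at h6
            exact h6
          have hEq : σ (FTheta.E θ (θ.symm (i', j)).1) (σ (FTheta.F θ (θ.symm (i', j)).2) (ξ c'))
              = (γ * β) • ξ b := by
            have h5 : σ (FTheta.F θ j) (σ (FTheta.E θ i') (ξ c')) = (γ * β) • ξ b := by
              rw [hγ, ContinuousLinearMap.map_smul, hF, smul_smul]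
            calc σ (FTheta.E θ (θ.symm (i', j)).1) (σ (FTheta.F θ (θ.symm (i', j)).2) (ξ c'))
                = σ (FTheta.E θ (θ.symm (i', j)).1 * FTheta.F θ (θ.symm (i', j)).2) (ξ c') := by
                  rw [map_mul, ContinuousLinearMap.mul_apply]
              _ = σ (FTheta.F θ j * FTheta.E θ i') (ξ c') := by rw [hcomm]
              _ = σ (FTheta.F θ j) (σ (FTheta.E θ i') (ξ c')) := by
                  rw [map_mul, ContinuousLinearMap.mul_apply]
              _ = (γ * β) • ξ b := h5
          have hγβ : γ * β ≠ 0 := mul_ne_zero hγ0 hβ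
          have hne2 : σ (FTheta.F θ (θ.symm (i', j)).2) (ξ c') ≠ 0 := by
            intro h0
            rw [h0, map_zero] at hEq
            exact smul_ne_zero hγβ (hne b) hEq.symm
          rcases hatomic (FTheta.F θ (θ.symm (i', j)).2) c' with ⟨r', δ, hδnorm, hδ⟩ | h0
          swap
          · exact absurd h0 hne2
          have hδ0 : δ ≠ 0 := by
            intro h; rw [h] at hδnorm; simp at hδnorm
          rw [hδ] at hEq
          have hEr' := scal_div hδ0 hEq
          obtain ⟨p, _, hpu⟩ := hdfE b
          have e1 := hpu ((θ.symm (i', j)).1, r')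
            ⟨δ⁻¹ * (γ * β), mul_ne_zero (inv_ne_zero hδ0) hγβ, hEr'⟩
          have e2 := hpu (i₀, r) ⟨μ⁻¹ * α, hμα, hg⟩
          have hrr : r' = r := congrArg Prod.snd (e1.trans e2.symm)
          rw [hrr] at hδ
          obtain ⟨t', u, w, γ', δ', hγ', hδ', hu, hw⟩ :=
            IH t r c' (θ.symm (i', j)).2 μ δ hμ hδ0 hr hδ
          refine ⟨t', u, FTheta.E θ i' * w, γ', δ' * γ, hγ', mul_ne_zero hδ' hγ0, hu, ?_⟩
          rw [map_mul, ContinuousLinearMap.mul_apply, hw,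
            ContinuousLinearMap.map_smul, hγ, smul_smul]

end Aux


/-- In a defect free atomic representation σ of F_θ⁺ with connected
graph, any two basis rays ℂξ₁, ℂξ₂ have a common pull-back: there are a basis ray ℂη
and words w₁, w₂ ∈ F_θ⁺ with σ(wᵢ)·ℂη = ℂξᵢ. -/
theorem common_pullback_of_connected {m n : ℕ} (θ : Equiv.Perm (Fin m × Fin n))
    {H : Type*} [NormedAddCommGroup H] [InnerProductSpace ℂ H] [CompleteSpace H]
    {S : Type*} (ξ : S → H) (hon : Orthonormal ℂ ξ)
    (σ : FTheta θ →* (H →L[ℂ] H))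
    (hatomic : ∀ (w : FTheta θ) (s : S),
      (∃ (t : S) (α : ℂ), ‖α‖ = 1 ∧ σ w (ξ s) = α • ξ t) ∨ σ w (ξ s) = 0)
    -- defect free: each basis ray is in the range of exactly one σ(e_i) and one σ(f_j)
    (hdfE : ∀ s : S, ∃! p : Fin m × S,
      ∃ α : ℂ, α ≠ 0 ∧ σ (FTheta.E θ p.1) (ξ p.2) = α • ξ s)
    (hdfF : ∀ s : S, ∃! q : Fin n × S,
      ∃ α : ℂ, α ≠ 0 ∧ σ (FTheta.F θ q.1) (ξ q.2) = α • ξ s)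
    -- connectedness of the (undirected) graph of σ
    (hconn : ∀ s t : S, Relation.ReflTransGen
      (fun a b =>
        (∃ i : Fin m, ∃ α : ℂ, α ≠ 0 ∧ σ (FTheta.E θ i) (ξ a) = α • ξ b) ∨
        (∃ j : Fin n, ∃ α : ℂ, α ≠ 0 ∧ σ (FTheta.F θ j) (ξ a) = α • ξ b) ∨
        (∃ i : Fin m, ∃ α : ℂ, α ≠ 0 ∧ σ (FTheta.E θ i) (ξ b) = α • ξ a) ∨
        (∃ j : Fin n, ∃ α : ℂ, α ≠ 0 ∧ σ (FTheta.F θ j) (ξ b) = α • ξ a)) s t) :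
    ∀ s₁ s₂ : S, ∃ (t : S) (w₁ w₂ : FTheta θ) (α₁ α₂ : ℂ),
      α₁ ≠ 0 ∧ α₂ ≠ 0 ∧ σ w₁ (ξ t) = α₁ • ξ s₁ ∧ σ w₂ (ξ t) = α₂ • ξ s₂ := by
  intro s₁ s₂
  induction hconn s₁ s₂ with
  | refl =>
      exact ⟨s₁, 1, 1, 1, 1, one_ne_zero, one_ne_zero, by simp, by simp⟩
  | tail _ hedge ih =>
      rename_i b c _
      obtain ⟨t, w₁, w₂, α₁, α₂, hα₁, hα₂, hw₁, hw₂⟩ := ih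
      rcases hedge with ⟨i, α, hα0, hα⟩ | ⟨j, α, hα0, hα⟩ | ⟨i, α, hα0, hα⟩ | ⟨j, α, hα0, hα⟩
      · refine ⟨t, w₁, FTheta.E θ i * w₂, α₁, α₂ * α, hα₁, mul_ne_zero hα₂ hα0, hw₁, ?_⟩
        rw [map_mul, ContinuousLinearMap.mul_apply, hw₂,
          ContinuousLinearMap.map_smul, hα, smul_smul]
      · refine ⟨t, w₁, FTheta.F θ j * w₂, α₁, α₂ * α, hα₁, mul_ne_zero hα₂ hα0, hw₁, ?_⟩
        rw [map_mul, ContinuousLinearMap.mul_apply, hw₂,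
          ContinuousLinearMap.map_smul, hα, smul_smul]
      · obtain ⟨L, hLw⟩ := Con.mk'_surjective w₂
        rw [← hLw] at hw₂
        obtain ⟨t', u, w, γ, δ, hγ, hδ, hu, hw⟩ :=
          pullE hon hatomic hdfE hdfF L t b c i α₂ α hα₂ hα0 hw₂ hα
        refine ⟨t', w₁ * u, w, γ * α₁, δ, mul_ne_zero hγ hα₁, hδ, ?_, hw⟩
        rw [map_mul, ContinuousLinearMap.mul_apply, hu,
          ContinuousLinearMap.map_smul, hw₁, smul_smul]
      · obtain ⟨L, hLw⟩ := Con.mk'_surjective w₂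
        rw [← hLw] at hw₂
        obtain ⟨t', u, w, γ, δ, hγ, hδ, hu, hw⟩ :=
          pullF hon hatomic hdfE hdfF L t b c j α₂ α hα₂ hα0 hw₂ hα
        refine ⟨t', w₁ * u, w, γ * α₁, δ, mul_ne_zero hγ hα₁, hδ, ?_, hw⟩
        rw [map_mul, ContinuousLinearMap.mul_apply, hu,
          ContinuousLinearMap.map_smul, hw₁, smul_smul]
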